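/- For b > 0 and c > 0, ∑_{k=1}^∞ log(1 + 1/k)·(⌈(c/(kε))^{1/b}⌉ − 1) ≥ (c^{1/b}/ε^{1/b}) ∑_{k=1}^∞ log(1 + 1/k)/k^{1/b} + O(log(ε^{-1})) as ε → 0. -/

import Mathlib

open Filter

lemma aux_key {p t : ℝ} (hp : 0 < p) (ht : 1 ≤ t) :
    p * (t + 1) ^ (-(1 + p)) ≤ t ^ (-p) - (t + 1) ^ (-p) := by
  have h0 : (0:ℝ) < t := lt_of_lt_of_le one_pos ht
  have h1 : (0:ℝ) < t + 1 := by linarith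
  have hu : (0:ℝ) < t ^ p := Real.rpow_pos_of_pos h0 p
  have hv : (0:ℝ) < (t + 1) ^ p := Real.rpow_pos_of_pos h1 p
  have hdiv : (0:ℝ) ≤ 1 / t := by positivity
  have hB := one_add_mul_self_le_rpow_one_add (s := 1 / t)
    (by linarith : (-1:ℝ) ≤ 1 / t) (p := 1 + p) (by linarith)
  have he : (1:ℝ) + 1 / t = (t + 1) / t := by field_simp
  rw [he, Real.div_rpow (by linarith) h0.le] at hB
  have e1 : (t + 1) ^ (1 + p) = (t + 1) * (t + 1) ^ p := by
    rw [Real.rpow_add h1, Real.rpow_one]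
  have e2 : t ^ (1 + p) = t * t ^ p := by
    rw [Real.rpow_add h0, Real.rpow_one]
  rw [e1, e2] at hB
  have hB' : t * t ^ p + (1 + p) * t ^ p ≤ (t + 1) * (t + 1) ^ p := by
    have h2 : (1 + (1 + p) * (1 / t)) * (t * t ^ p) ≤ (t + 1) * (t + 1) ^ p := by
      rw [← le_div_iff₀ (by positivity)]; exact hB
    calc t * t ^ p + (1 + p) * t ^ p = (1 + (1 + p) * (1 / t)) * (t * t ^ p) := by
          field_simp
      _ ≤ (t + 1) * (t + 1) ^ p := h2
  rw [Real.rpow_neg h0.le, Real.rpow_neg h1.le, Real.rpow_neg h1.le, e1, ← sub_nonneg]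
  have expand : (t ^ p)⁻¹ - ((t + 1) ^ p)⁻¹ - p * ((t + 1) * (t + 1) ^ p)⁻¹
      = ((t + 1) * (t + 1) ^ p - (t + 1) * t ^ p - p * t ^ p) /
        (t ^ p * ((t + 1) * (t + 1) ^ p)) := by
    field_simp
  rw [expand]
  apply div_nonneg _ (by positivity)
  nlinarith [hB']

set_option maxHeartbeats 1000000 in
theorem stmt13 (b c : ℝ) (hb : 0 < b) (hc : 0 < c) :
    ∃ C : ℝ, ∀ᶠ ε in nhdsWithin (0 : ℝ) (Set.Ioi 0),
      (∑' k : ℕ, Real.logb 2 (1 + 1 / ((k : ℝ) + 1)) *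
          ((⌈(c / (((k : ℝ) + 1) * ε)) ^ ((1 : ℝ) / b)⌉₊ : ℝ) - 1))
        ≥ c ^ ((1 : ℝ) / b) / ε ^ ((1 : ℝ) / b) *
            (∑' k : ℕ, Real.logb 2 (1 + 1 / ((k : ℝ) + 1)) / ((k : ℝ) + 1) ^ ((1 : ℝ) / b))
          - C * Real.logb 2 ε⁻¹ := by
  have hlog2 : (0:ℝ) < Real.log 2 := Real.log_pos one_lt_two
  have hp : 0 < (1:ℝ) / b := by positivity
  set p : ℝ := 1 / b with hpdef
  set K : ℝ := Real.logb 2 (c + 2) + b / Real.log 2 with hKdef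
  refine ⟨2, ?_⟩
  have hδ : (0:ℝ) < min 1 ((2:ℝ) ^ (-K)) :=
    lt_min one_pos (Real.rpow_pos_of_pos two_pos _)
  filter_upwards [Ioo_mem_nhdsGT_of_mem (Set.mem_Ico.2 ⟨le_refl (0:ℝ), hδ⟩)] with ε hε
  obtain ⟨hε0, hεlt⟩ := hε
  have hε1 : ε ≤ 1 := le_of_lt (lt_of_lt_of_le hεlt (min_le_left _ _))
  have hεK : ε < ((2:ℝ) ^ K)⁻¹ := by
    have h := lt_of_lt_of_le hεlt (min_le_right _ _)
    rwa [Real.rpow_neg (by norm_num : (0:ℝ) ≤ 2)] at h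
  have hinv1 : (1:ℝ) ≤ ε⁻¹ := one_le_inv_iff₀.2 ⟨hε0, hε1⟩
  have hKε : K ≤ Real.logb 2 ε⁻¹ := by
    have h2K : (2:ℝ) ^ K ≤ ε⁻¹ := by
      have h := inv_strictAnti₀ hε0 hεK
      rw [inv_inv] at h
      exact h.le
    calc K = Real.logb 2 ((2:ℝ) ^ K) := (Real.logb_rpow two_pos (by norm_num)).symm
      _ ≤ Real.logb 2 ε⁻¹ :=
        Real.logb_le_logb_of_le one_lt_two (Real.rpow_pos_of_pos two_pos _) h2K
  -- notation
  set ℓ : ℕ → ℝ := fun k => Real.logb 2 (1 + 1 / ((k : ℝ) + 1)) with hℓdef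
  set s : ℕ → ℝ := fun k => ℓ k / ((k : ℝ) + 1) ^ p with hsdef
  set x : ℕ → ℝ := fun k => (c / (((k : ℝ) + 1) * ε)) ^ p with hxdef
  set A : ℝ := c ^ p / ε ^ p with hAdef
  have hA0 : 0 ≤ A := by positivity
  have hℓ0 : ∀ k, 0 ≤ ℓ k := by
    intro k
    have h : (0:ℝ) ≤ 1 / ((k:ℝ) + 1) := by positivity
    exact Real.logb_nonneg one_lt_two (by linarith)
  have hs0 : ∀ k, 0 ≤ s k := fun k =>
    div_nonneg (hℓ0 k) (Real.rpow_nonneg (by positivity) _)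
  -- threshold
  set N : ℕ := ⌈c / ε⌉₊ with hNdef
  have hN1 : 1 ≤ N := Nat.ceil_pos.2 (by positivity)
  have hNc : c / ε ≤ (N : ℝ) := Nat.le_ceil _
  have hN1R : (1:ℝ) ≤ (N:ℝ) := by exact_mod_cast hN1
  -- ℓ bound
  have hℓle : ∀ k : ℕ, ℓ k ≤ 1 / (((k : ℝ) + 1) * Real.log 2) := by
    intro k
    have hk1 : (0:ℝ) < (k : ℝ) + 1 := by positivity
    have hlog : Real.log (1 + 1 / ((k : ℝ) + 1)) ≤ 1 / ((k : ℝ) + 1) := by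
      have h := Real.log_le_sub_one_of_pos (x := 1 + 1 / ((k : ℝ) + 1)) (by positivity)
      linarith
    have hform : ℓ k = Real.log (1 + 1 / ((k : ℝ) + 1)) / Real.log 2 := rfl
    have h4 : Real.log (1 + 1 / ((k : ℝ) + 1)) * ((k:ℝ) + 1) ≤ 1 := by
      have h5 := mul_le_mul_of_nonneg_right hlog hk1.le
      have h6 : 1 / ((k:ℝ) + 1) * ((k:ℝ) + 1) = 1 := by field_simp
      linarith
    rw [hform, div_le_div_iff₀ hlog2 (by positivity)]
    nlinarith
  -- summability of s
  have hsum_aux : Summable (fun k : ℕ => 1 / ((k : ℝ) + 1) ^ (1 + p)) := by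
    have h1 : Summable (fun n : ℕ => 1 / (n : ℝ) ^ (1 + p)) :=
      Real.summable_one_div_nat_rpow.2 (by linarith)
    have h2 := (summable_nat_add_iff 1).2 h1
    simpa using h2
  have hsle : ∀ k : ℕ, s k ≤ (1 / Real.log 2) * (1 / ((k : ℝ) + 1) ^ (1 + p)) := by
    intro k
    have hk1 : (0:ℝ) < (k : ℝ) + 1 := by positivity
    have hkp : (0:ℝ) < ((k : ℝ) + 1) ^ p := Real.rpow_pos_of_pos hk1 _
    have e : ((k : ℝ) + 1) ^ (1 + p) = ((k : ℝ) + 1) * ((k : ℝ) + 1) ^ p := by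
      rw [Real.rpow_add hk1, Real.rpow_one]
    have h1 : s k ≤ (1 / (((k : ℝ) + 1) * Real.log 2)) / (((k : ℝ) + 1) ^ p) :=
      (div_le_div_iff_of_pos_right hkp).2 (hℓle k)
    have h2 : (1 / (((k : ℝ) + 1) * Real.log 2)) / (((k : ℝ) + 1) ^ p)
        = (1 / Real.log 2) * (1 / ((k : ℝ) + 1) ^ (1 + p)) := by
      rw [e]; field_simp
    linarith [h1, h2.symm.le, h2.le]
  have hs_sum : Summable s :=
    Summable.of_nonneg_of_le hs0 hsle (hsum_aux.mul_left _)
  -- ℓ k * x k = A * s k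
  have hx_eq : ∀ k : ℕ, ℓ k * x k = A * s k := by
    intro k
    have hk1 : (0:ℝ) < (k : ℝ) + 1 := by positivity
    have hx2 : x k = c ^ p / (((k : ℝ) + 1) ^ p * ε ^ p) := by
      simp only [hxdef]
      rw [Real.div_rpow hc.le (by positivity), Real.mul_rpow (by positivity) hε0.le]
    rw [hx2]
    simp only [hsdef, hAdef]
    ring
  -- vanishing beyond N
  have hf0 : ∀ k ∉ Finset.range N, ℓ k * ((⌈x k⌉₊ : ℝ) - 1) = 0 := by
    intro k hk
    simp only [Finset.mem_range, not_lt] at hk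
    have hkN : (N:ℝ) ≤ (k:ℝ) := Nat.cast_le.2 hk
    have hble : c / (((k:ℝ) + 1) * ε) ≤ 1 := by
      rw [div_le_one (by positivity)]
      have h2 : c / ε ≤ (k:ℝ) + 1 := by linarith
      calc c = c / ε * ε := by field_simp
        _ ≤ ((k:ℝ) + 1) * ε := by nlinarith
    have hx1 : x k ≤ 1 := by
      simp only [hxdef]
      exact Real.rpow_le_one (by positivity) hble hp.le
    have hxk0 : 0 < x k := by simp only [hxdef]; positivity
    have hceil : ⌈x k⌉₊ = 1 :=
      le_antisymm (Nat.ceil_le.2 (by simpa using hx1)) (Nat.ceil_pos.2 hxk0)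
    simp [hceil]
  have htsum_eq : (∑' k : ℕ, ℓ k * ((⌈x k⌉₊ : ℝ) - 1))
      = ∑ k ∈ Finset.range N, ℓ k * ((⌈x k⌉₊ : ℝ) - 1) := tsum_eq_sum hf0
  -- pointwise lower bound
  have hpt : ∀ k : ℕ, A * s k - ℓ k ≤ ℓ k * ((⌈x k⌉₊ : ℝ) - 1) := by
    intro k
    have h1 : x k - 1 ≤ (⌈x k⌉₊ : ℝ) - 1 := by
      have h := Nat.le_ceil (x k); linarith
    have h2 : ℓ k * (x k - 1) ≤ ℓ k * ((⌈x k⌉₊ : ℝ) - 1) :=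
      mul_le_mul_of_nonneg_left h1 (hℓ0 k)
    calc A * s k - ℓ k = ℓ k * x k - ℓ k := by rw [hx_eq k]
      _ = ℓ k * (x k - 1) := by ring
      _ ≤ _ := h2
  -- telescoping sum of ℓ
  have hℓtel : ∑ k ∈ Finset.range N, ℓ k = Real.logb 2 ((N:ℝ) + 1) := by
    have hcongr : ∀ k ∈ Finset.range N, ℓ k =
        (fun m : ℕ => Real.logb 2 ((m:ℝ) + 1)) (k + 1)
          - (fun m : ℕ => Real.logb 2 ((m:ℝ) + 1)) k := by
      intro k _
      have hk1 : (0:ℝ) < (k:ℝ) + 1 := by positivity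
      simp only [hℓdef]
      rw [show (1:ℝ) + 1 / ((k:ℝ) + 1) = (((k:ℝ) + 1) + 1) / ((k:ℝ) + 1) by
        field_simp]
      rw [Real.logb_div (by positivity) hk1.ne']
      push_cast
      ring_nf
    rw [Finset.sum_congr rfl hcongr, Finset.sum_range_sub
      (fun m : ℕ => Real.logb 2 ((m:ℝ) + 1))]
    norm_num
  -- bound on logb (N+1)
  have hNlog : Real.logb 2 ((N:ℝ) + 1) ≤ Real.logb 2 (c + 2) + Real.logb 2 ε⁻¹ := by
    have h2 : (N:ℝ) < c / ε + 1 := Nat.ceil_lt_add_one (by positivity)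
    have h3 : c / ε = c * ε⁻¹ := div_eq_mul_inv c ε
    have h1 : ((N:ℝ) + 1) ≤ (c + 2) * ε⁻¹ := by nlinarith
    calc Real.logb 2 ((N:ℝ) + 1) ≤ Real.logb 2 ((c + 2) * ε⁻¹) :=
          Real.logb_le_logb_of_le one_lt_two (by positivity) h1
      _ = Real.logb 2 (c + 2) + Real.logb 2 ε⁻¹ :=
          Real.logb_mul (by positivity) (by positivity)
  -- the tail
  set tail : ℝ := ∑' j : ℕ, s (j + N) with htaildef
  have hsplit : ∑ k ∈ Finset.range N, s k = (∑' k, s k) - tail := by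
    have h := Summable.sum_add_tsum_nat_add N hs_sum
    linarith
  have htail_le : tail ≤ 1 / (p * Real.log 2) * (N:ℝ) ^ (-p) := by
    apply Real.tsum_le_of_sum_range_le (fun n => hs0 _)
    intro n
    have key : ∀ j : ℕ, s (j + N) ≤ 1 / (p * Real.log 2) *
        (((N:ℝ) + j) ^ (-p) - ((N:ℝ) + ((j:ℝ) + 1)) ^ (-p)) := by
      intro j
      have hj0 : (0:ℝ) ≤ (j:ℝ) := Nat.cast_nonneg j
      have ht1 : (1:ℝ) ≤ (N:ℝ) + j := by linarith
      have hT : (0:ℝ) < (N:ℝ) + j + 1 := by linarith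
      have hcast : ((j + N : ℕ):ℝ) + 1 = (N:ℝ) + j + 1 := by push_cast; ring
      have hTp : (0:ℝ) < ((N:ℝ) + j + 1) ^ p := Real.rpow_pos_of_pos hT _
      have h1 : s (j + N) ≤ (1 / (((N:ℝ) + j + 1) * Real.log 2)) / (((N:ℝ) + j + 1) ^ p) := by
        have hle := hℓle (j + N)
        rw [hcast] at hle
        have := (div_le_div_iff_of_pos_right hTp).2 hle
        simpa only [hsdef, hcast] using this
      have e : ((N:ℝ) + j + 1) ^ (-(1 + p))
          = 1 / (((N:ℝ) + j + 1) * ((N:ℝ) + j + 1) ^ p) := by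
        rw [Real.rpow_neg hT.le, Real.rpow_add hT, Real.rpow_one, one_div]
      have h2 : (1 / (((N:ℝ) + j + 1) * Real.log 2)) / (((N:ℝ) + j + 1) ^ p)
          = (1 / Real.log 2) * ((N:ℝ) + j + 1) ^ (-(1 + p)) := by
        rw [e]; field_simp
      have h3 := aux_key hp ht1
      -- p * (N+j+1)^(-(1+p)) ≤ (N+j)^(-p) - (N+j+1)^(-p)
      have h4 : (1 / Real.log 2) * ((N:ℝ) + j + 1) ^ (-(1 + p))
          ≤ 1 / (p * Real.log 2) * (((N:ℝ) + j) ^ (-p) - ((N:ℝ) + j + 1) ^ (-p)) := by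
        have hpos : (0:ℝ) ≤ 1 / (p * Real.log 2) := by positivity
        have h5 := mul_le_mul_of_nonneg_left h3 hpos
        have h6 : 1 / (p * Real.log 2) * (p * ((N:ℝ) + j + 1) ^ (-(1 + p)))
            = 1 / Real.log 2 * ((N:ℝ) + j + 1) ^ (-(1 + p)) := by
          field_simp
        linarith
      have hfin : ((N:ℝ) + ((j:ℝ) + 1)) = (N:ℝ) + j + 1 := by ring
      rw [hfin]
      calc s (j + N) ≤ (1 / (((N:ℝ) + j + 1) * Real.log 2)) / (((N:ℝ) + j + 1) ^ p) := h1
        _ = (1 / Real.log 2) * ((N:ℝ) + j + 1) ^ (-(1 + p)) := h2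
        _ ≤ _ := h4
    have hg : ∀ j : ℕ, ((N:ℝ) + ((j:ℝ) + 1)) ^ (-p)
        = (fun m : ℕ => ((N:ℝ) + m) ^ (-p)) (j + 1) := by
      intro j; push_cast; ring_nf
    calc ∑ j ∈ Finset.range n, s (j + N)
        ≤ ∑ j ∈ Finset.range n, 1 / (p * Real.log 2) *
            (((N:ℝ) + j) ^ (-p) - ((N:ℝ) + ((j:ℝ) + 1)) ^ (-p)) :=
          Finset.sum_le_sum (fun j _ => key j)
      _ = 1 / (p * Real.log 2) * ∑ j ∈ Finset.range n,
            ((fun m : ℕ => ((N:ℝ) + m) ^ (-p)) j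
              - (fun m : ℕ => ((N:ℝ) + m) ^ (-p)) (j + 1)) := by
          rw [Finset.mul_sum]
          refine Finset.sum_congr rfl (fun j _ => ?_)
          rw [hg j]
      _ = 1 / (p * Real.log 2) * (((N:ℝ) + (0:ℕ)) ^ (-p) - ((N:ℝ) + n) ^ (-p)) := by
          rw [Finset.sum_range_sub' (fun m : ℕ => ((N:ℝ) + m) ^ (-p))]
      _ ≤ 1 / (p * Real.log 2) * (N:ℝ) ^ (-p) := by
          have hn0 : (0:ℝ) ≤ (n:ℝ) := Nat.cast_nonneg n
          have hnn : (0:ℝ) ≤ ((N:ℝ) + n) ^ (-p) :=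
            Real.rpow_nonneg (by linarith) _
          have : ((N:ℝ) + (0:ℕ)) ^ (-p) = (N:ℝ) ^ (-p) := by norm_num
          rw [this]
          have hpos : (0:ℝ) ≤ 1 / (p * Real.log 2) := by positivity
          exact mul_le_mul_of_nonneg_left (by linarith) hpos
  have htail0 : 0 ≤ tail := tsum_nonneg (fun j => hs0 _)
  have hAtail : A * tail ≤ b / Real.log 2 := by
    have hNpos : (0:ℝ) < (N:ℝ) := by linarith
    have hNp : (0:ℝ) < (N:ℝ) ^ p := Real.rpow_pos_of_pos hNpos _
    have hANp : A * (N:ℝ) ^ (-p) ≤ 1 := by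
      have hA_eq : A = (c / ε) ^ p := by
        rw [hAdef, Real.div_rpow hc.le hε0.le]
      have h1 : (c / ε) ^ p ≤ (N:ℝ) ^ p := Real.rpow_le_rpow (by positivity) hNc hp.le
      rw [hA_eq, Real.rpow_neg hNpos.le]
      calc (c / ε) ^ p * ((N:ℝ) ^ p)⁻¹ ≤ (N:ℝ) ^ p * ((N:ℝ) ^ p)⁻¹ :=
            mul_le_mul_of_nonneg_right h1 (inv_nonneg.2 hNp.le)
        _ = 1 := mul_inv_cancel₀ hNp.ne'
    calc A * tail ≤ A * (1 / (p * Real.log 2) * (N:ℝ) ^ (-p)) :=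
          mul_le_mul_of_nonneg_left htail_le hA0
      _ = 1 / (p * Real.log 2) * (A * (N:ℝ) ^ (-p)) := by ring
      _ ≤ 1 / (p * Real.log 2) * 1 := mul_le_mul_of_nonneg_left hANp (by positivity)
      _ = b / Real.log 2 := by
          rw [hpdef]; field_simp
  -- final assembly
  show (∑' k : ℕ, ℓ k * ((⌈x k⌉₊ : ℝ) - 1))
      ≥ A * (∑' k : ℕ, s k) - 2 * Real.logb 2 ε⁻¹
  rw [htsum_eq]
  have h1 : ∑ k ∈ Finset.range N, (A * s k - ℓ k)
      ≤ ∑ k ∈ Finset.range N, ℓ k * ((⌈x k⌉₊ : ℝ) - 1) :=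
    Finset.sum_le_sum (fun k _ => hpt k)
  have h2 : ∑ k ∈ Finset.range N, (A * s k - ℓ k)
      = A * (∑ k ∈ Finset.range N, s k) - ∑ k ∈ Finset.range N, ℓ k := by
    rw [Finset.sum_sub_distrib, Finset.mul_sum]
  rw [h2, hsplit, hℓtel] at h1
  have h3 : A * ((∑' k, s k) - tail) = A * (∑' k, s k) - A * tail := by ring
  rw [h3] at h1
  linarith
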